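/- Let X be a random variable on the nonnegative integers with mean ν and finite q-th moment m_q = E[X^q] for some q ∈ (1,2]. There is a constant c_q depending only on q such that for all s ∈ [0,1], G(s) ≤ 1 + ν(s-1) + c_q m_q (1-s)^q, where G is the generating function of X. -/
import Mathlib

lemma aux_binom (t : ℝ) (h0 : 0 ≤ t) (h1 : t ≤ 1) :
    ∀ k : ℕ, (1 - t) ^ k ≤ 1 - k * t + k * (k - 1) * t ^ 2 / 2 := by
  intro k
  induction k with
  | zero => simp
  | succ n ih =>
    have h2 : (0:ℝ) ≤ 1 - t := by linarith
    have hnn : (0:ℝ) ≤ (n:ℝ) * ((n:ℝ) - 1) := by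
      rcases Nat.eq_zero_or_pos n with h | h
      · simp [h]
      · have : (1:ℝ) ≤ n := by exact_mod_cast h
        nlinarith
    have key := mul_le_mul_of_nonneg_right ih h2
    have ht3 : (0:ℝ) ≤ t ^ 3 := by positivity
    rw [pow_succ]
    push_cast
    nlinarith [mul_nonneg hnn ht3]

lemma aux_pt (q : ℝ) (hq1 : 1 < q) (hq2 : q ≤ 2) (k : ℕ) (t : ℝ)
    (h0 : 0 ≤ t) (h1 : t ≤ 1) :
    (1 - t) ^ k ≤ 1 - k * t + (k:ℝ) ^ q * t ^ q := by
  have hk0 : (0:ℝ) ≤ k := Nat.cast_nonneg k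
  have ha0 : 0 ≤ (k:ℝ) * t := mul_nonneg hk0 h0
  have hmul : (k:ℝ) ^ q * t ^ q = ((k:ℝ) * t) ^ q := (Real.mul_rpow hk0 h0).symm
  rw [hmul]
  by_cases hle : (k:ℝ) * t ≤ 1
  · have hb := aux_binom t h0 h1 k
    have hsq : ((k:ℝ) * t) ^ 2 ≤ ((k:ℝ) * t) ^ q := by
      rcases eq_or_lt_of_le ha0 with ha | ha
      · rw [← ha, Real.zero_rpow (by linarith : q ≠ 0)]
        norm_num
      · calc ((k:ℝ) * t) ^ 2 = ((k:ℝ) * t) ^ ((2:ℕ):ℝ) := (Real.rpow_natCast _ 2).symm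
          _ ≤ ((k:ℝ) * t) ^ q := by
              apply Real.rpow_le_rpow_of_exponent_ge ha hle
              exact_mod_cast hq2
    have hkk : (k:ℝ) * ((k:ℝ) - 1) * t ^ 2 ≤ ((k:ℝ) * t) ^ 2 := by nlinarith [sq_nonneg t]
    nlinarith
  · have hge : 1 ≤ (k:ℝ) * t := le_of_not_ge hle
    have h2 : (k:ℝ) * t ≤ ((k:ℝ) * t) ^ q := by
      calc (k:ℝ) * t = ((k:ℝ) * t) ^ (1:ℝ) := (Real.rpow_one _).symm
        _ ≤ ((k:ℝ) * t) ^ q := Real.rpow_le_rpow_of_exponent_le hge (le_of_lt hq1)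
    have hpow : (1 - t) ^ k ≤ 1 := pow_le_one₀ (by linarith) (by linarith)
    linarith

/-- For an ℕ-valued random variable with pmf `μ`, mean `ν` and finite `q`-th moment
`m_q` with `q ∈ (1,2]`, there is a constant `c_q` depending only on `q` with
`G s ≤ 1 + ν (s-1) + c_q m_q (1-s)^q` for all `s ∈ [0,1]`. -/
theorem stmt1 (q : ℝ) (hq1 : 1 < q) (hq2 : q ≤ 2) :
    ∃ c : ℝ, 0 < c ∧
      ∀ (μ : ℕ → ℝ), (∀ k, 0 ≤ μ k) → (∑' k, μ k = 1) →
        ∀ ν mq : ℝ, HasSum (fun (k : ℕ) => (k : ℝ) * μ k) ν →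
          HasSum (fun (k : ℕ) => (k : ℝ) ^ q * μ k) mq →
          ∀ s ∈ Set.Icc (0 : ℝ) 1,
            ∑' k, μ k * s ^ k ≤ 1 + ν * (s - 1) + c * mq * (1 - s) ^ q := by
  refine ⟨1, one_pos, ?_⟩
  intro μ hμ hsum1 ν mq hν hmq s hs
  obtain ⟨hs0, hs1⟩ := hs
  have hμs : Summable μ := by
    by_contra h
    rw [tsum_eq_zero_of_not_summable h] at hsum1
    norm_num at hsum1
  have hμ1 : HasSum μ 1 := hsum1 ▸ hμs.hasSum
  have hF : HasSum (fun k : ℕ => μ k + (k:ℝ) * μ k * (s - 1) + (k:ℝ) ^ q * μ k * ((1 - s) ^ q))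
      (1 + ν * (s - 1) + mq * (1 - s) ^ q) :=
    (hμ1.add (hν.mul_right (s - 1))).add (hmq.mul_right ((1 - s) ^ q))
  have key : ∀ k : ℕ, μ k * s ^ k ≤
      μ k + (k:ℝ) * μ k * (s - 1) + (k:ℝ) ^ q * μ k * ((1 - s) ^ q) := by
    intro k
    have h := aux_pt q hq1 hq2 k (1 - s) (by linarith) (by linarith)
    have heq : (1 - (1 - s)) = s := by ring
    rw [heq] at h
    have h2 := mul_le_mul_of_nonneg_left h (hμ k)
    have h3 : μ k + (k:ℝ) * μ k * (s - 1) + (k:ℝ) ^ q * μ k * ((1 - s) ^ q)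
        = μ k * (1 - k * (1 - s) + (k:ℝ) ^ q * (1 - s) ^ q) := by ring
    rw [h3]
    exact h2
  have hG : Summable (fun k : ℕ => μ k * s ^ k) := by
    apply Summable.of_nonneg_of_le
      (fun k => mul_nonneg (hμ k) (pow_nonneg hs0 k))
      (fun k => ?_) hμs
    nlinarith [(pow_le_one₀ hs0 hs1 : s ^ k ≤ 1), hμ k, pow_nonneg hs0 k]
  calc ∑' k, μ k * s ^ k
      ≤ ∑' k, (μ k + (k:ℝ) * μ k * (s - 1) + (k:ℝ) ^ q * μ k * ((1 - s) ^ q)) :=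
        Summable.tsum_le_tsum key hG hF.summable
    _ = 1 + ν * (s - 1) + mq * (1 - s) ^ q := hF.tsum_eq
    _ = 1 + ν * (s - 1) + 1 * mq * (1 - s) ^ q := by ring
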